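/- Verification of energetic costs (Corollary 1): let G = (V, A, c) be a finite weighted directed graph, B > 0, s ∈ V, and d : V → ℝ ∪ {∞} a function such that (i) d(s) = 0; (ii) for every v with d(v) < ∞ there exists an s–v path P with d_B(P) = d(v); and (iii) d(v) ≤ d(u) ⊕_B c(uv) for every arc uv ∈ A. Then d(v) = δ_B(s, v) for every v ∈ V. -/
import Mathlib


open scoped Classical

/-- The clamped addition `x ⊕_B y = [x + y]₀ᴮ` on `ℝ ∪ {∞}` (modeled inside `EReal`;
inputs are never `⊥`). -/
noncomputable def eplus (B : ℝ) (x y : EReal) : EReal :=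
  if x + y < 0 then 0 else if x + y ≤ (B : EReal) then x + y else ⊤

/-- `batt B b cst i` is the charge `b_i` of the battery after traversing the first `i`
arcs of a path whose `i`-th arc (0-indexed) has cost `cst i`, starting from charge `b`. -/
noncomputable def batt (B b : ℝ) (cst : ℕ → ℝ) : ℕ → ℝ
  | 0 => b
  | i + 1 => min (batt B b cst i - cst i) B

/-- The path with arc costs `cst 0, …, cst (k-1)` is traversable from initial charge `b`. -/
def Trav (B b : ℝ) (cst : ℕ → ℝ) (k : ℕ) : Prop :=
  ∀ i, i < k → cst i ≤ batt B b cst i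

/-- The energetic cost `d_{B,b}(P) = b - b_k` of a path with arc costs
`cst 0, …, cst (k-1)`, or `∞` if not traversable from initial charge `b`. -/
noncomputable def dE (B b : ℝ) (cst : ℕ → ℝ) (k : ℕ) : EReal :=
  if Trav B b cst k then ((b - batt B b cst k : ℝ) : EReal) else ⊤

/-- `u 0, u 1, …, u k` is a path in the graph with arc relation `Arc`. -/
def IsPath {V : Type*} (Arc : V → V → Prop) (u : ℕ → V) (k : ℕ) : Prop :=
  ∀ i, i < k → Arc (u i) (u (i + 1))

/-- The energetic cost `δ_{B,b}(s,t)`: the minimum of `d_{B,b}(P)` over all `s`–`t`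
paths `P` (`∞` if there is none). -/
noncomputable def deltaE {V : Type*} (Arc : V → V → Prop) (c : V → V → ℝ)
    (B b : ℝ) (s t : V) : EReal :=
  sInf { x : EReal | ∃ (u : ℕ → V) (k : ℕ), IsPath Arc u k ∧ u 0 = s ∧ u k = t ∧
    x = dE B b (fun i => c (u i) (u (i + 1))) k }

/-- The standard distance `δ(s,t)`: the infimum of total costs of `s`–`t` paths. -/
noncomputable def distE {V : Type*} (Arc : V → V → Prop) (c : V → V → ℝ)
    (s t : V) : EReal :=
  sInf { x : EReal | ∃ (u : ℕ → V) (k : ℕ), IsPath Arc u k ∧ u 0 = s ∧ u k = t ∧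
    x = ((∑ i ∈ Finset.range k, c (u i) (u (i + 1)) : ℝ) : EReal) }

/-- The graph has no negative cycles. -/
def NoNegCycles {V : Type*} (Arc : V → V → Prop) (c : V → V → ℝ) : Prop :=
  ∀ (u : ℕ → V) (k : ℕ), IsPath Arc u k → u k = u 0 → 1 ≤ k →
    0 ≤ ∑ i ∈ Finset.range k, c (u i) (u (i + 1))

lemma aux_bound (B : ℝ) (cst : ℕ → ℝ) (k : ℕ) (hT : Trav B B cst k)
    (e : ℕ → EReal) (he0 : e 0 = 0)
    (hstep : ∀ i, i < k → e (i + 1) ≤ eplus B (e i) ((cst i : ℝ) : EReal))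
    (hbot : ∀ i, e i ≠ ⊥) :
    ∀ i, i ≤ k → e i ≤ ((B - batt B B cst i : ℝ) : EReal) := by
  intro i
  induction i with
  | zero => intro _; simp [batt, he0]
  | succ i ih =>
    intro hik
    have hi := ih (by omega)
    have hne : e i ≠ ⊤ := by
      intro h; rw [h] at hi; exact EReal.coe_ne_top _ (top_le_iff.mp hi)
    lift e i to ℝ using ⟨hne, hbot i⟩ with x hx
    have hxle : x ≤ B - batt B B cst i := by exact_mod_cast hi
    have hci : cst i ≤ batt B B cst i := hT i (by omega)
    have hmin1 : batt B B cst (i + 1) ≤ batt B B cst i - cst i :=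
      min_le_left _ _
    have hmin2 : batt B B cst (i + 1) ≤ B := min_le_right _ _
    have hsum : x + cst i ≤ B := by linarith
    have h2 : x + cst i ≤ B - batt B B cst (i + 1) := by linarith
    refine le_trans (hstep i (by omega)) ?_
    unfold eplus
    rw [← hx, ← EReal.coe_add]
    split_ifs with hc1 hc2
    · exact_mod_cast (by linarith : (0 : ℝ) ≤ B - batt B B cst (i + 1))
    · exact_mod_cast h2
    · exact absurd (EReal.coe_le_coe_iff.mpr hsum) hc2

/-- verification of energetic costs, Corollary 1: if `d : V → ℝ ∪ {∞}`
satisfies `d(s) = 0`, every finite `d(v)` is the energetic cost of some `s`–`v` path,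
and `d(v) ≤ d(u) ⊕_B c(uv)` for every arc `uv`, then `d(v) = δ_B(s,v)` for all `v`. -/
theorem verify_energetic_costs {V : Type*} [Fintype V] (Arc : V → V → Prop)
    (c : V → V → ℝ) (B : ℝ) (hB : 0 < B) (s : V) (d : V → EReal)
    (hbot : ∀ v, d v ≠ ⊥) (hds : d s = 0)
    (hwit : ∀ v, d v ≠ ⊤ → ∃ (u : ℕ → V) (k : ℕ), IsPath Arc u k ∧ u 0 = s ∧ u k = v ∧
      dE B B (fun i => c (u i) (u (i + 1))) k = d v)
    (htri : ∀ u v, Arc u v → d v ≤ eplus B (d u) ((c u v : ℝ) : EReal)) :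
    ∀ v, d v = deltaE Arc c B B s v := by
  intro v
  refine le_antisymm ?_ ?_
  · apply le_sInf
    rintro x ⟨u, k, hp, h0, hk, rfl⟩
    unfold dE
    split_ifs with hT
    · have hb := aux_bound B (fun i => c (u i) (u (i + 1))) k hT
        (fun i => d (u i)) (by simp [h0, hds])
        (fun i hik => htri _ _ (hp i hik)) (fun i => hbot _) k le_rfl
      simpa only [hk] using hb
    · exact le_top
  · rcases eq_or_ne (d v) ⊤ with h | h
    · rw [h]; exact le_top
    · obtain ⟨u, k, hp, h0, hk, hdE⟩ := hwit v h
      exact sInf_le ⟨u, k, hp, h0, hk, hdE.symm⟩
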